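/- arXiv:1309.5679 — 5 statements merged into one kernel-verified Lean document; each statement's English description precedes it below -/
import Mathlib

section
/- For any real 3×3 matrix B, the coefficient of x² in the characteristic polynomial det(x·I₄ − K) of Davenport's K-matrix K equals −2(tr B)² + tr(adj S) − zᵀz, where S = B + Bᵀ, adj S denotes the adjugate matrix of S, and z = (B₂₃ − B₃₂, B₃₁ − B₁₃, B₁₂ − B₂₁)ᵀ. -/
open Matrix

/-- Davenport's K-matrix of a real 3×3 matrix `B`. -/
noncomputable def davenportK (B : Matrix (Fin 3) (Fin 3) ℝ) : Matrix (Fin 4) (Fin 4) ℝ :=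
  let S := B + Bᵀ
  let t := B.trace
  let z : Fin 3 → ℝ := ![B 1 2 - B 2 1, B 2 0 - B 0 2, B 0 1 - B 1 0]
  !![S 0 0 - t, S 0 1,     S 0 2,     z 0;
     S 1 0,     S 1 1 - t, S 1 2,     z 1;
     S 2 0,     S 2 1,     S 2 2 - t, z 2;
     z 0,       z 1,       z 2,       t  ]

open Polynomial in
private lemma eval_cp' (M : Matrix (Fin 4) (Fin 4) ℝ) (x : ℝ) :
    M.charpoly.eval x = (Matrix.of fun i j => (if i = j then x else 0) - M i j).det := by
  rw [Matrix.charpoly, ← coe_evalRingHom, RingHom.map_det]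
  congr 1
  ext i j
  simp [charmatrix_apply, Matrix.one_apply, diagonal_apply, apply_ite]

open Polynomial in
private lemma coeff_two_of_eval' (p : ℝ[X]) (hm : p.Monic) (hd : p.natDegree = 4) :
    p.coeff 2 = (p.eval 1 + p.eval (-1)) / 2 - 1 - p.eval 0 := by
  have h4 : p.coeff 4 = 1 := by
    have := hm.leadingCoeff
    rwa [leadingCoeff, hd] at this
  have he : ∀ x : ℝ, p.eval x = ∑ k ∈ Finset.range 5, p.coeff k * x ^ k := by
    intro x
    rw [eval_eq_sum_range, hd]
  have h1 := he 1
  have h2 := he (-1)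
  have h0 := he 0
  simp [Finset.sum_range_succ] at h1 h2 h0
  rw [h1, h2, h0, h4]
  ring

set_option maxHeartbeats 2000000 in
/-- The coefficient of `x²` in the characteristic polynomial of Davenport's K-matrix
equals `−2(tr B)² + tr(adj S) − zᵀz` with `S = B + Bᵀ`. -/
theorem davenportK_charpoly_coeff_two (B : Matrix (Fin 3) (Fin 3) ℝ)
    (z : Fin 3 → ℝ) (hz : z = ![B 1 2 - B 2 1, B 2 0 - B 0 2, B 0 1 - B 1 0]) :
    (davenportK B).charpoly.coeff 2
      = -2 * B.trace ^ 2 + (B + Bᵀ).adjugate.trace - z ⬝ᵥ z := by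
  subst hz
  rw [davenportK, coeff_two_of_eval' _ (Matrix.charpoly_monic _)
    (by simp), eval_cp', eval_cp', eval_cp']
  simp only [det_succ_row_zero, Fin.sum_univ_succ, Matrix.trace, Matrix.diag, dotProduct,
    adjugate_apply, det_fin_three, updateRow_apply, transpose_apply, Matrix.add_apply,
    Finset.sum_empty, Fin.sum_univ_zero, of_apply, submatrix_apply]
  norm_num [Fin.succAbove, Fin.lt_def, Fin.ext_iff, Pi.single_apply]
  simp [Matrix.cons_val]
  ring
end

section
/- Let B be a real 3×3 matrix and K its Davenport K-matrix. For any q̄ = (q₁, q₂, q₃, q₄) ∈ ℝ⁴ with q₁² + q₂² + q₃² + q₄² = 1, let A(q̄) be the 3×3 rotation matrix A(q̄) = (q₄² − q₁² − q₂² − q₃²)·I₃ + 2vvᵀ − 2q₄·[v]ₓ, where v = (q₁, q₂, q₃)ᵀ and [v]ₓ is the skew-symmetric cross-product matrix of v. Then q̄ᵀ K q̄ = tr(A(q̄) Bᵀ). -/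
open Matrix

/-- The skew-symmetric cross-product matrix `[v]ₓ` of `v ∈ ℝ³`. -/
def crossMat (v : Fin 3 → ℝ) : Matrix (Fin 3) (Fin 3) ℝ :=
  !![0, -v 2, v 1;
     v 2, 0, -v 0;
     -v 1, v 0, 0]

/-- For a unit quaternion `q̄ = (q₁,q₂,q₃,q₄)` with rotation matrix
`A(q̄) = (q₄² − q₁² − q₂² − q₃²)·I₃ + 2vvᵀ − 2q₄[v]ₓ`, `v = (q₁,q₂,q₃)ᵀ`,
one has `q̄ᵀ K q̄ = tr(A(q̄) Bᵀ)`. -/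
theorem quadForm_davenportK_eq_trace (B : Matrix (Fin 3) (Fin 3) ℝ)
    (q : Fin 4 → ℝ) (hq : q 0 ^ 2 + q 1 ^ 2 + q 2 ^ 2 + q 3 ^ 2 = 1)
    (v : Fin 3 → ℝ) (hv : v = ![q 0, q 1, q 2])
    (A : Matrix (Fin 3) (Fin 3) ℝ)
    (hA : A = (q 3 ^ 2 - q 0 ^ 2 - q 1 ^ 2 - q 2 ^ 2) • (1 : Matrix (Fin 3) (Fin 3) ℝ)
        + (2 : ℝ) • Matrix.vecMulVec v v - (2 * q 3) • crossMat v) :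
    q ⬝ᵥ (davenportK B).mulVec q = (A * Bᵀ).trace := by
  subst hv hA
  simp [davenportK, crossMat, trace_fin_three, Matrix.mul_apply, Matrix.mulVec,
    dotProduct, Fin.sum_univ_succ, Matrix.vecMulVec, Matrix.one_apply]
  have h3 : q (Fin.succ 2) = q 3 := rfl
  ring
end

section
/- Let b_1,...,b_n and r_1,...,r_n be unit vectors in ℝ³, a_1,...,a_n real weights, B = Σ_{i=1}^n a_i b_i r_iᵀ, and K the Davenport K-matrix of B. For a unit vector q̄ = (q₁, q₂, q₃, q₄) ∈ ℝ⁴ let A(q̄) = (q₄² − q₁² − q₂² − q₃²)·I₃ + 2vvᵀ − 2q₄·[v]ₓ with v = (q₁, q₂, q₃)ᵀ. Then the minimum over the unit sphere of ℝ⁴ of Wahba's loss L(A(q̄)) = (1/2)·Σ_{i=1}^n a_i ‖b_i − A(q̄) r_i‖² equals Σ_{i=1}^n a_i − λ_max, where λ_max is the largest eigenvalue of K, and this minimum is attained exactly at the unit eigenvectors of K associated with λ_max. -/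
open Matrix

/-- The rotation-like matrix associated to a quaternion-parameter vector `q`. -/
noncomputable def Amat (q : Fin 4 → ℝ) : Matrix (Fin 3) (Fin 3) ℝ :=
  (q 3 ^ 2 - q 0 ^ 2 - q 1 ^ 2 - q 2 ^ 2) • (1 : Matrix (Fin 3) (Fin 3) ℝ)
    + (2 : ℝ) • Matrix.vecMulVec ![q 0, q 1, q 2] ![q 0, q 1, q 2]
    - (2 * q 3) • crossMat ![q 0, q 1, q 2]

lemma norm_sq_euc (x : EuclideanSpace ℝ (Fin 3)) : ‖x‖ ^ 2 = ∑ j, x j ^ 2 := by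
  rw [EuclideanSpace.norm_eq, Real.sq_sqrt (by positivity)]
  simp [sq_abs]

lemma per_obs (q : Fin 4 → ℝ) (bb rr : Fin 3 → ℝ)
    (hq : (∑ j, q j ^ 2) = 1) (hbb : (∑ j, bb j ^ 2) = 1) (hrr : (∑ j, rr j ^ 2) = 1) :
    ∑ j, (bb j - ((Amat q) *ᵥ rr) j) ^ 2
      = 2 - 2 * ∑ j, ∑ k, (Amat q) j k * (bb j * rr k) := by
  simp only [Fin.sum_univ_three, Fin.sum_univ_four] at *
  simp only [Amat, crossMat, Matrix.mulVec, dotProduct, Fin.sum_univ_three,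
    Matrix.sub_apply, Matrix.add_apply, Matrix.smul_apply, Matrix.one_fin_three,
    Matrix.vecMulVec_apply, Matrix.cons_val', Matrix.cons_val_zero, Matrix.cons_val_one,
    Matrix.head_cons, Matrix.empty_val', Matrix.cons_val_fin_one, Matrix.head_fin_const,
    Matrix.cons_val_two, Matrix.cons_val_three, Matrix.tail_cons,
    Matrix.of_apply, smul_eq_mul]
  linear_combination hbb + (q 0 ^ 2 + q 1 ^ 2 + q 2 ^ 2 + q 3 ^ 2) ^ 2 * hrr
    + (q 0 ^ 2 + q 1 ^ 2 + q 2 ^ 2 + q 3 ^ 2 + 1) * hq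

lemma dK_form (B : Matrix (Fin 3) (Fin 3) ℝ) (q : Fin 4 → ℝ) :
    q ⬝ᵥ ((davenportK B) *ᵥ q) = ∑ j, ∑ k, (Amat q) j k * B j k := by
  simp only [davenportK, Amat, crossMat, Matrix.mulVec, dotProduct,
    Fin.sum_univ_three, Fin.sum_univ_four, Matrix.trace, Matrix.diag,
    Matrix.sub_apply, Matrix.add_apply, Matrix.smul_apply, Matrix.one_fin_three,
    Matrix.vecMulVec_apply, Matrix.transpose_apply, Matrix.cons_val', Matrix.cons_val_zero,
    Matrix.cons_val_one, Matrix.head_cons, Matrix.empty_val', Matrix.cons_val_fin_one,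
    Matrix.cons_val_two, Matrix.cons_val_three, Matrix.tail_cons,
    Matrix.head_fin_const, Matrix.of_apply, smul_eq_mul]
  ring

lemma davenportK_isHermitian (B : Matrix (Fin 3) (Fin 3) ℝ) :
    (davenportK B).IsHermitian := by
  rw [Matrix.IsHermitian]
  ext i j
  fin_cases i <;> fin_cases j <;>
    simp [davenportK, Matrix.conjTranspose_apply] <;> ring

lemma exists_unit_eigvec (K : Matrix (Fin 4) (Fin 4) ℝ) (lam : ℝ)
    (hlam : lam ∈ spectrum ℝ K) :
    ∃ q : Fin 4 → ℝ, (∑ j, q j ^ 2) = 1 ∧ K *ᵥ q = lam • q := by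
  rw [← Matrix.spectrum_toEuclideanLin (A := K)] at hlam
  obtain ⟨v, hv⟩ := (Module.End.hasEigenvalue_iff_mem_spectrum.2 hlam).exists_hasEigenvector
  have hv1 : K *ᵥ ⇑v = lam • ⇑v := by
    have h := hv.apply_eq_smul
    rw [toEuclideanLin_apply] at h
    exact congrArg (WithLp.equiv 2 (Fin 4 → ℝ)) h
  have hvne : ∃ j, v j ≠ 0 := by
    by_contra h
    push_neg at h
    exact hv.2 (by ext j; exact h j)
  have hpos : 0 < ∑ j, v j ^ 2 := by
    obtain ⟨j, hj⟩ := hvne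
    exact Finset.sum_pos' (fun i _ => sq_nonneg _) ⟨j, Finset.mem_univ j, by positivity⟩
  set c : ℝ := (Real.sqrt (∑ j, v j ^ 2))⁻¹ with hc
  refine ⟨c • ⇑v, ?_, ?_⟩
  · have : ∑ j, (c • ⇑v) j ^ 2 = c ^ 2 * ∑ j, v j ^ 2 := by
      simp [Finset.mul_sum, mul_pow]
    rw [this, hc, inv_pow, Real.sq_sqrt hpos.le, inv_mul_cancel₀ hpos.ne']
  · rw [mulVec_smul, hv1, smul_comm]

lemma rayleigh_le (K : Matrix (Fin 4) (Fin 4) ℝ) (hK : K.IsHermitian) (lam : ℝ)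
    (hmax : ∀ μ ∈ spectrum ℝ K, μ ≤ lam) (q : Fin 4 → ℝ) (hq : (∑ j, q j ^ 2) = 1) :
    q ⬝ᵥ (K *ᵥ q) ≤ lam ∧ (q ⬝ᵥ (K *ᵥ q) = lam ↔ K *ᵥ q = lam • q) := by
  classical
  set U : Matrix (Fin 4) (Fin 4) ℝ := ↑(hK.eigenvectorUnitary) with hUdef
  have hU1 : star U * U = 1 := Unitary.coe_star_mul_self hK.eigenvectorUnitary
  have hU2 : U * star U = 1 := (Matrix.mem_unitaryGroup_iff).mp hK.eigenvectorUnitary.2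
  set μ : Fin 4 → ℝ := hK.eigenvalues with hμ
  have spec : K = U * diagonal μ * star U := by
    have := hK.spectral_theorem
    simpa using this
  set c : Fin 4 → ℝ := (star U) *ᵥ q with hcdef
  have hUc : U *ᵥ c = q := by rw [hcdef, mulVec_mulVec, hU2, one_mulVec]
  have hdot : ∀ x : Fin 4 → ℝ, q ⬝ᵥ (U *ᵥ x) = c ⬝ᵥ x := by
    intro x
    rw [dotProduct_mulVec, hcdef, ← mulVec_transpose]
    congr 1
  have sumsq : ∀ w : Fin 4 → ℝ, w ⬝ᵥ w = ∑ j, w j ^ 2 := fun w =>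
    Finset.sum_congr rfl (fun i _ => (sq (w i)).symm)
  have hKq : K *ᵥ q = U *ᵥ (diagonal μ *ᵥ c) := by
    rw [spec, ← mulVec_mulVec, ← mulVec_mulVec, hcdef]
  have hval : q ⬝ᵥ (K *ᵥ q) = ∑ i, μ i * c i ^ 2 := by
    rw [hKq, hdot]
    refine Finset.sum_congr rfl fun i _ => ?_
    rw [mulVec_diagonal]; ring
  have h2 : q ⬝ᵥ q = c ⬝ᵥ c := by
    nth_rewrite 2 [← hUc]
    rw [hdot]
  have hnorm : ∑ i, c i ^ 2 = 1 := by
    rw [← sumsq, ← h2, sumsq, hq]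
  have hle : ∀ i, μ i ≤ lam := fun i => hmax _ (hK.eigenvalues_mem_spectrum_real i)
  have hbound : q ⬝ᵥ (K *ᵥ q) ≤ lam := by
    rw [hval, ← mul_one lam, ← hnorm, Finset.mul_sum]
    exact Finset.sum_le_sum fun i _ => mul_le_mul_of_nonneg_right (hle i) (sq_nonneg _)
  refine ⟨hbound, ?_⟩
  have heigc : K *ᵥ q = lam • q ↔ ∀ i, μ i * c i = lam * c i := by
    constructor
    · intro h
      have hd : diagonal μ *ᵥ c = lam • c := by
        have e1 : star U *ᵥ (K *ᵥ q) = diagonal μ *ᵥ c := by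
          rw [hKq, mulVec_mulVec, mulVec_mulVec, hU1, Matrix.one_mul]
        have e2 : star U *ᵥ (lam • q) = lam • c := by rw [mulVec_smul, hcdef]
        rw [← e1, ← e2, h]
      intro i
      have := congrFun hd i
      rw [mulVec_diagonal] at this
      simpa using this
    · intro h
      rw [hKq]
      have : diagonal μ *ᵥ c = lam • c := by
        funext i; rw [mulVec_diagonal]; simpa using h i
      rw [this, mulVec_smul, hUc]
  rw [heigc, hval]
  constructor
  · intro h i
    have hsum0 : ∑ i, (lam - μ i) * c i ^ 2 = 0 := by
      have : ∑ i, (lam - μ i) * c i ^ 2 = lam * ∑ i, c i ^ 2 - ∑ i, μ i * c i ^ 2 := by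
        rw [Finset.mul_sum, ← Finset.sum_sub_distrib]
        exact Finset.sum_congr rfl fun i _ => by ring
      rw [this, hnorm, h, mul_one, sub_self]
    have hterm := (Finset.sum_eq_zero_iff_of_nonneg
      (fun i _ => mul_nonneg (sub_nonneg.2 (hle i)) (sq_nonneg (c i)))).1 hsum0 i (Finset.mem_univ i)
    rcases mul_eq_zero.1 hterm with h1 | h1
    · rw [sub_eq_zero] at h1; rw [← h1]
    · have : c i = 0 := by nlinarith [sq_nonneg (c i)]
      rw [this, mul_zero, mul_zero]
  · intro h
    calc ∑ i, μ i * c i ^ 2 = ∑ i, lam * c i ^ 2 := by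
          refine Finset.sum_congr rfl fun i _ => ?_
          rw [sq, ← mul_assoc, h i, mul_assoc, ← sq]
      _ = lam := by rw [← Finset.mul_sum, hnorm, mul_one]

/-- The minimum of Wahba's loss `L(A(q̄))` over the unit sphere of `ℝ⁴` equals
`Σ aᵢ − λ_max`, where `λ_max` is the largest eigenvalue of Davenport's K-matrix,
and the minimum is attained exactly at the unit eigenvectors of `K` for `λ_max`. -/
theorem wahba_min_over_quaternions (n : ℕ)
    (b r : Fin n → EuclideanSpace ℝ (Fin 3)) (a : Fin n → ℝ)
    (hb : ∀ i, ‖b i‖ = 1) (hr : ∀ i, ‖r i‖ = 1)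
    (B : Matrix (Fin 3) (Fin 3) ℝ)
    (hB : B = ∑ i, a i • Matrix.vecMulVec (b i) (r i))
    (Aq : (Fin 4 → ℝ) → Matrix (Fin 3) (Fin 3) ℝ)
    (hAq : ∀ q : Fin 4 → ℝ, Aq q
      = (q 3 ^ 2 - q 0 ^ 2 - q 1 ^ 2 - q 2 ^ 2) • (1 : Matrix (Fin 3) (Fin 3) ℝ)
        + (2 : ℝ) • Matrix.vecMulVec ![q 0, q 1, q 2] ![q 0, q 1, q 2]
        - (2 * q 3) • crossMat ![q 0, q 1, q 2])
    (L : (Fin 4 → ℝ) → ℝ)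
    (hL : ∀ q : Fin 4 → ℝ, L q = (1 / 2 : ℝ) *
      ∑ i, a i * ‖b i - (WithLp.equiv 2 (Fin 3 → ℝ)).symm ((Aq q).mulVec (r i))‖ ^ 2)
    (lam : ℝ) (hlam : lam ∈ spectrum ℝ (davenportK B))
    (hmax : ∀ μ ∈ spectrum ℝ (davenportK B), μ ≤ lam) :
    IsLeast {x : ℝ | ∃ q : Fin 4 → ℝ, (∑ j, q j ^ 2) = 1 ∧ L q = x} ((∑ i, a i) - lam)
      ∧ ∀ q : Fin 4 → ℝ, (∑ j, q j ^ 2) = 1 →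
        (L q = (∑ i, a i) - lam ↔ (davenportK B).mulVec q = lam • q) := by
  have hKH : (davenportK B).IsHermitian := davenportK_isHermitian B
  have hLq : ∀ q : Fin 4 → ℝ, (∑ j, q j ^ 2) = 1 →
      L q = (∑ i, a i) - q ⬝ᵥ ((davenportK B) *ᵥ q) := by
    intro q hq
    rw [hL]
    have hAm : Aq q = Amat q := by rw [hAq]; rfl
    have hterm : ∀ i, a i * ‖b i - (WithLp.equiv 2 (Fin 3 → ℝ)).symm ((Aq q).mulVec (r i))‖ ^ 2
        = a i * (2 - 2 * ∑ j, ∑ k, (Amat q) j k * (b i j * r i k)) := by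
      intro i
      congr 1
      rw [norm_sq_euc, hAm]
      have hbi : (∑ j, (b i j) ^ 2) = 1 := by
        have h1 := norm_sq_euc (b i)
        rw [hb i] at h1
        simpa using h1.symm
      have hri : (∑ j, (r i j) ^ 2) = 1 := by
        have h1 := norm_sq_euc (r i)
        rw [hr i] at h1
        simpa using h1.symm
      exact per_obs q (b i) (r i) hq hbi hri
    rw [Finset.sum_congr rfl (fun i _ => hterm i)]
    have hswap : ∑ i, a i * (∑ j, ∑ k, (Amat q) j k * (b i j * r i k))
        = q ⬝ᵥ ((davenportK B) *ᵥ q) := by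
      rw [dK_form]
      have hBjk : ∀ j k, B j k = ∑ i, a i * (b i j * r i k) := by
        intro j k
        rw [hB]
        simp [Matrix.sum_apply, Matrix.vecMulVec_apply, mul_assoc]
      calc ∑ i, a i * (∑ j, ∑ k, (Amat q) j k * (b i j * r i k))
          = ∑ i, ∑ j, ∑ k, a i * ((Amat q) j k * (b i j * r i k)) := by
            refine Finset.sum_congr rfl fun i _ => ?_
            rw [Finset.mul_sum]
            exact Finset.sum_congr rfl fun j _ => by rw [Finset.mul_sum]
        _ = ∑ j, ∑ i, ∑ k, a i * ((Amat q) j k * (b i j * r i k)) := Finset.sum_comm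
        _ = ∑ j, ∑ k, (Amat q) j k * B j k := by
            refine Finset.sum_congr rfl fun j _ => ?_
            rw [Finset.sum_comm]
            refine Finset.sum_congr rfl fun k _ => ?_
            rw [hBjk, Finset.mul_sum]
            exact Finset.sum_congr rfl fun i _ => by ring
    have expand : ∑ i, a i * (2 - 2 * ∑ j, ∑ k, (Amat q) j k * (b i j * r i k))
        = 2 * (∑ i, a i) - 2 * (∑ i, a i * (∑ j, ∑ k, (Amat q) j k * (b i j * r i k))) := by
      rw [Finset.mul_sum, Finset.mul_sum, ← Finset.sum_sub_distrib]
      exact Finset.sum_congr rfl fun i _ => by ring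
    rw [expand, hswap]
    ring
  constructor
  · constructor
    · obtain ⟨q, hq1, hq2⟩ := exists_unit_eigvec _ lam hlam
      refine ⟨q, hq1, ?_⟩
      rw [hLq q hq1, hq2]
      have : q ⬝ᵥ (lam • q) = lam := by
        rw [dotProduct_smul, smul_eq_mul]
        have : q ⬝ᵥ q = ∑ j, q j ^ 2 :=
          Finset.sum_congr rfl (fun j _ => (sq (q j)).symm)
        rw [this, hq1, mul_one]
      rw [this]
    · rintro x ⟨q, hq1, rfl⟩
      rw [hLq q hq1]
      have := (rayleigh_le _ hKH lam hmax q hq1).1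
      linarith
  · intro q hq1
    rw [hLq q hq1, sub_right_inj]
    exact (rayleigh_le _ hKH lam hmax q hq1).2
end

section
/- Let B be a real 3×3 matrix and K its Davenport K-matrix. Every eigenvalue λ of K satisfies the quartic equation λ⁴ + b·λ² + c·λ + d = 0, where b = −2(tr B)² + tr(adj(B + Bᵀ)) − zᵀz, c = −tr(adj K), d = det K, and z = (B₂₃ − B₃₂, B₃₁ − B₁₃, B₁₂ − B₂₁)ᵀ. -/
open Matrix

lemma det_fin_four' (A : Matrix (Fin 4) (Fin 4) ℝ) : A.det =
    A 0 0 * (A 1 1*(A 2 2*A 3 3 - A 2 3*A 3 2) - A 1 2*(A 2 1*A 3 3 - A 2 3*A 3 1) + A 1 3*(A 2 1*A 3 2 - A 2 2*A 3 1))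
  - A 0 1 * (A 1 0*(A 2 2*A 3 3 - A 2 3*A 3 2) - A 1 2*(A 2 0*A 3 3 - A 2 3*A 3 0) + A 1 3*(A 2 0*A 3 2 - A 2 2*A 3 0))
  + A 0 2 * (A 1 0*(A 2 1*A 3 3 - A 2 3*A 3 1) - A 1 1*(A 2 0*A 3 3 - A 2 3*A 3 0) + A 1 3*(A 2 0*A 3 1 - A 2 1*A 3 0))
  - A 0 3 * (A 1 0*(A 2 1*A 3 2 - A 2 2*A 3 1) - A 1 1*(A 2 0*A 3 2 - A 2 2*A 3 0) + A 1 2*(A 2 0*A 3 1 - A 2 1*A 3 0)) := by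
  rw [Matrix.det_succ_row_zero, Fin.sum_univ_four]
  norm_num [Matrix.det_fin_three, Fin.succAbove, Matrix.submatrix_apply, Fin.lt_def,
    show (Fin.succ 2 : Fin 4) = 3 from rfl, show (Fin.castSucc 2 : Fin 4) = 2 from rfl,
    show ((3:Fin 4) : ℕ) = 3 from rfl]
  ring

/-- Every eigenvalue `λ` of Davenport's K-matrix satisfies
`λ⁴ + b·λ² + c·λ + d = 0` with `b = −2(tr B)² + tr(adj(B + Bᵀ)) − zᵀz`,
`c = −tr(adj K)` and `d = det K`. -/
theorem davenportK_eigenvalue_quartic (B : Matrix (Fin 3) (Fin 3) ℝ)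
    (z : Fin 3 → ℝ) (hz : z = ![B 1 2 - B 2 1, B 2 0 - B 0 2, B 0 1 - B 1 0])
    (lam : ℝ) (hlam : lam ∈ spectrum ℝ (davenportK B)) :
    lam ^ 4 + (-2 * B.trace ^ 2 + (B + Bᵀ).adjugate.trace - z ⬝ᵥ z) * lam ^ 2
      + (-(davenportK B).adjugate.trace) * lam + (davenportK B).det = 0 := by
  rw [spectrum.mem_iff] at hlam
  have hdet : ((algebraMap ℝ (Matrix (Fin 4) (Fin 4) ℝ)) lam - davenportK B).det = 0 := by
    by_contra h
    exact hlam ((Matrix.isUnit_iff_isUnit_det _).mpr (isUnit_iff_ne_zero.mpr h))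
  have key : lam ^ 4 + (-2 * B.trace ^ 2 + (B + Bᵀ).adjugate.trace - z ⬝ᵥ z) * lam ^ 2
      + (-(davenportK B).adjugate.trace) * lam + (davenportK B).det
      = ((algebraMap ℝ (Matrix (Fin 4) (Fin 4) ℝ)) lam - davenportK B).det := by
    subst hz
    simp only [Matrix.algebraMap_eq_diagonal, davenportK, Matrix.trace_fin_three,
      Matrix.adjugate_fin_three, dotProduct]
    simp only [Matrix.trace, Matrix.diag, Matrix.adjugate_apply, Fin.sum_univ_four,
      Fin.sum_univ_three]
    simp only [det_fin_four']
    simp [Matrix.det_fin_three, Matrix.updateRow_apply, Pi.single_apply,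
      Matrix.add_apply, Matrix.transpose_apply, Fin.sum_univ_three,
      Matrix.sub_apply, Matrix.diagonal_apply]
    ring
  rw [key, hdet]
end

section
/- Let a, b, c, d ∈ ℂ and suppose y ∈ ℂ is a root of the resolvent cubic y³ + p·y + q = 0, where p = ac − b²/3 − 4d and q = abc/3 − a²d − 2b³/27 − c² + 8bd/3. Then there exist g₁, g₂, h₁, h₂ ∈ ℂ satisfying g₁ + g₂ = a, g₁g₂ = 2b/3 − y, h₁ + h₂ = y + b/3, h₁h₂ = d, and g₁h₂ + g₂h₁ = c; consequently x⁴ + a·x³ + b·x² + c·x + d = (x² + g₁·x + h₁)·(x² + g₂·x + h₂) as polynomials over ℂ. -/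
open Polynomial

/-- Once the four scalar relations hold, the polynomial factorization follows. -/
lemma poly_factor_aux (a b c d g₁ g₂ h₁ h₂ : ℂ)
    (e1 : g₁ + g₂ = a) (e2 : g₁ * g₂ + (h₁ + h₂) = b)
    (e3 : g₁ * h₂ + g₂ * h₁ = c) (e4 : h₁ * h₂ = d) :
    (X ^ 4 + C a * X ^ 3 + C b * X ^ 2 + C c * X + C d : ℂ[X])
      = (X ^ 2 + C g₁ * X + C h₁) * (X ^ 2 + C g₂ * X + C h₂) := by
  rw [← e1, ← e2, ← e3, ← e4]
  simp only [map_add, map_mul]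
  ring

/-- If `y` is a root of the resolvent cubic `y³ + p·y + q = 0` with
`p = ac − b²/3 − 4d` and `q = abc/3 − a²d − 2b³/27 − c² + 8bd/3`, then the quartic
`x⁴ + a x³ + b x² + c x + d` factors over `ℂ` into two quadratics whose
coefficients satisfy Shmakov's relations. -/
theorem quartic_factorization_from_resolvent (a b c d y : ℂ)
    (hy : y ^ 3 + (a * c - b ^ 2 / 3 - 4 * d) * y
      + (a * b * c / 3 - a ^ 2 * d - 2 * b ^ 3 / 27 - c ^ 2 + 8 * b * d / 3) = 0) :
    ∃ g₁ g₂ h₁ h₂ : ℂ,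
      g₁ + g₂ = a ∧ g₁ * g₂ = 2 * b / 3 - y ∧ h₁ + h₂ = y + b / 3 ∧ h₁ * h₂ = d ∧
      g₁ * h₂ + g₂ * h₁ = c ∧
      (X ^ 4 + C a * X ^ 3 + C b * X ^ 2 + C c * X + C d : ℂ[X])
        = (X ^ 2 + C g₁ * X + C h₁) * (X ^ 2 + C g₂ * X + C h₂) := by
  obtain ⟨G, hGsq⟩ : ∃ G : ℂ, G ^ 2 = a ^ 2 - 4 * (2 * b / 3 - y) :=
    IsAlgClosed.exists_pow_nat_eq _ (by norm_num)
  by_cases hG : G = 0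
  · -- degenerate case: the two quadratic factors share the same linear coefficient
    have hA : a ^ 2 - 4 * (2 * b / 3 - y) = 0 := by rw [← hGsq, hG]; ring
    have hc2 : (a * (y + b / 3) - 2 * c) ^ 2 = 0 := by
      linear_combination (-4 : ℂ) * hy + ((y + b / 3) ^ 2 - 4 * d) * hA
    have hc : a * (y + b / 3) - 2 * c = 0 :=
      pow_eq_zero_iff (n := 2) (by norm_num) |>.mp hc2
    obtain ⟨H, hH⟩ : ∃ H : ℂ, H ^ 2 = (y + b / 3) ^ 2 - 4 * d :=
      IsAlgClosed.exists_pow_nat_eq _ (by norm_num)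
    refine ⟨a / 2, a / 2, ((y + b / 3) + H) / 2, ((y + b / 3) - H) / 2, by ring,
      by linear_combination hA / 4, by ring, by linear_combination (-1 / 4 : ℂ) * hH,
      by linear_combination hc / 2, ?_⟩
    apply poly_factor_aux
    · ring
    · linear_combination hA / 4
    · linear_combination hc / 2
    · linear_combination (-1 / 4 : ℂ) * hH
  · -- generic case
    refine ⟨(a + G) / 2, (a - G) / 2,
      ((y + b / 3) - (2 * c - a * (y + b / 3)) / G) / 2,
      ((y + b / 3) + (2 * c - a * (y + b / 3)) / G) / 2, by ring,
      by linear_combination (-1 / 4 : ℂ) * hGsq, by ring, ?_, ?_, ?_⟩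
    · field_simp
      linear_combination (36 : ℂ) * hy + 9 * ((y + b / 3) ^ 2 - 4 * d) * hGsq
    · field_simp
      ring_nf
    · apply poly_factor_aux
      · ring
      · linear_combination (-1 / 4 : ℂ) * hGsq
      · field_simp; ring_nf
      · field_simp
        linear_combination (36 : ℂ) * hy + 9 * ((y + b / 3) ^ 2 - 4 * d) * hGsq
end
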